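/- arXiv:0812.1779 — 4 statements merged into one kernel-verified Lean document; each statement's English description precedes it below -/
import Mathlib

section
/- Let A be a real n×n matrix, let λ : Fin n → ℝ be an injective family of eigenvalues of A, and for each j let v_j be a nonzero right eigenvector (A v_j = λ_j v_j) and u_j a nonzero left eigenvector (u_j A = λ_j u_j). Then for every j the inner product u_j ⬝ v_j is nonzero. -/
/-- If `A` is a real `n × n` matrix with `n` distinct real eigenvalues `eig j`,
`v j` a nonzero right eigenvector and `u j` a nonzero left eigenvector for `eig j`,
then `u j ⬝ᵥ v j ≠ 0` for every `j`. -/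
theorem left_right_eigenvector_dotProduct_ne_zero
    {n : ℕ} (A : Matrix (Fin n) (Fin n) ℝ)
    (eig : Fin n → ℝ) (heig : Function.Injective eig)
    (v u : Fin n → Fin n → ℝ)
    (hv_ne : ∀ j, v j ≠ 0)
    (hu_ne : ∀ j, u j ≠ 0)
    (hv : ∀ j, A.mulVec (v j) = eig j • v j)
    (hu : ∀ j, Matrix.vecMul (u j) A = eig j • u j) :
    ∀ j, dotProduct (u j) (v j) ≠ 0 := by
  intro j hj
  haveI : Nonempty (Fin n) := ⟨j⟩
  -- v is linearly independent
  have hli : LinearIndependent ℝ v := by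
    apply Module.End.eigenvectors_linearIndependent' (Matrix.mulVecLin A) eig heig v
    intro i
    exact ⟨Module.End.mem_eigenspace_iff.mpr (by simpa using hv i), hv_ne i⟩
  -- v forms a basis
  have hcard : Fintype.card (Fin n) = Module.finrank ℝ (Fin n → ℝ) := by simp
  let b := basisOfLinearIndependentOfCardEqFinrank hli hcard
  have hb : ∀ i, b i = v i := fun i =>
    congrFun (coe_basisOfLinearIndependentOfCardEqFinrank hli hcard) i
  -- biorthogonality: u j ⬝ v i = 0 for i ≠ j
  have horth : ∀ i, dotProduct (u j) (v i) = 0 := by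
    intro i
    rcases eq_or_ne i j with rfl | hne
    · exact hj
    · have key : eig j • dotProduct (u j) (v i)
          = eig i • dotProduct (u j) (v i) := by
        calc eig j • dotProduct (u j) (v i)
            = dotProduct (eig j • u j) (v i) :=
              (smul_dotProduct _ _ _).symm
          _ = dotProduct (Matrix.vecMul (u j) A) (v i) := by rw [hu j]
          _ = dotProduct (u j) (A.mulVec (v i)) :=
              (Matrix.dotProduct_mulVec _ _ _).symm
          _ = dotProduct (u j) (eig i • v i) := by rw [hv i]
          _ = eig i • dotProduct (u j) (v i) := dotProduct_smul _ _ _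
      have key' : eig j * dotProduct (u j) (v i)
          = eig i * dotProduct (u j) (v i) := by
        simpa [smul_eq_mul] using key
      have h0 : (eig j - eig i) * dotProduct (u j) (v i) = 0 := by
        rw [sub_mul, key', sub_self]
      rcases mul_eq_zero.mp h0 with h | h
      · exact absurd (heig (by linarith)) (Ne.symm hne)
      · exact h
  -- hence u j ⬝ x = 0 for all x, in particular x = u j
  have hadd : ∀ s : Finset (Fin n),
      dotProduct (u j) (∑ i ∈ s, b.repr (u j) i • v i) = 0 := by
    intro s
    induction s using Finset.induction with
    | empty => simp
    | insert _ _ h ih =>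
        rw [Finset.sum_insert h, dotProduct_add, ih, add_zero,
          dotProduct_smul, horth, smul_zero]
  have hall : dotProduct (u j) (u j) = 0 := by
    have hrepr : u j = ∑ i, b.repr (u j) i • v i := by
      conv_lhs => rw [← Module.Basis.sum_repr b (u j)]
      exact Finset.sum_congr rfl fun i _ => by rw [hb i]
    conv_lhs => rw [show dotProduct (u j) (u j)
      = dotProduct (u j) (∑ i, b.repr (u j) i • v i) from by rw [← hrepr]]
    exact hadd Finset.univ
  exact hu_ne j (dotProduct_self_eq_zero.mp hall)
end

section
/- For n ≥ 1, let A_n be the n×n real matrix with (A_n)_{01} = 1, (A_n)_{k,k−1} = (A_n)_{k,k+1} = 1/2 for 1 ≤ k ≤ n−1 (indices within range), and all other entries 0. Then the spectrum of A_n is exactly the set of the n distinct values {cos((2k+1)π/(2n)) : k = 0, 1, …, n−1}. -/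
open Real

/-- The reflecting simple random walk kernel on `ℕ`. -/
noncomputable def Pch (i j : ℕ) : ℝ :=
  if i = 0 then (if j = 1 then 1 else 0)
  else if j = i - 1 ∨ j = i + 1 then 1 / 2 else 0

open Polynomial Matrix in
lemma mem_spectrum_iff_eval_charpoly {n : ℕ} (M : Matrix (Fin n) (Fin n) ℝ) (x : ℝ) :
    x ∈ spectrum ℝ M ↔ M.charpoly.eval x = 0 := by
  rw [spectrum.mem_iff, Matrix.isUnit_iff_isUnit_det, isUnit_iff_ne_zero, not_not]
  have h1 : (algebraMap ℝ (Matrix (Fin n) (Fin n) ℝ) x - M).det = M.charpoly.eval x := by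
    rw [Matrix.charpoly, ← Polynomial.coe_evalRingHom, RingHom.map_det]
    congr 1
    ext i j
    by_cases h : i = j <;>
      simp [h, charmatrix_apply, Matrix.algebraMap_matrix_apply, Matrix.map_apply,
        Matrix.diagonal_apply, Matrix.sub_apply]
  rw [h1]

lemma sum_ite_val {n : ℕ} (m : ℕ) (g : Fin n → ℝ) :
    ∑ j : Fin n, (if (j : ℕ) = m then g j else 0)
      = if h : m < n then g ⟨m, h⟩ else 0 := by
  split_ifs with h
  · have h2 : ∀ j : Fin n, (if (j : ℕ) = m then g j else 0)
        = (if j = (⟨m, h⟩ : Fin n) then g j else 0) := by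
      intro j
      simp [Fin.ext_iff]
    rw [Finset.sum_congr rfl (fun j _ => h2 j)]
    simp
  · apply Finset.sum_eq_zero
    intro j _
    have : (j : ℕ) ≠ m := fun hj => h (hj ▸ j.isLt)
    simp [this]

lemma cos_nθ_zero {n k : ℕ} (hn : 1 ≤ n) :
    Real.cos ((n : ℝ) * ((2 * k + 1) * π / (2 * n))) = 0 := by
  have hn0 : (n : ℝ) ≠ 0 := Nat.cast_ne_zero.mpr (by omega)
  have h : (n : ℝ) * ((2 * k + 1) * π / (2 * n)) = k * π + π / 2 := by
    field_simp
  rw [h, Real.cos_add, Real.cos_pi_div_two, Real.sin_pi_div_two, Real.sin_nat_mul_pi]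
  ring

lemma cos_eig {n : ℕ} (hn : 1 ≤ n) (k : ℕ) (hk : k < n) :
    Real.cos ((2 * k + 1) * π / (2 * n)) ∈
      spectrum ℝ (Matrix.of fun i j : Fin n => Pch i j) := by
  set θ : ℝ := (2 * k + 1) * π / (2 * n) with hθ
  set lam : ℝ := Real.cos θ with hlam
  have hnθ : Real.cos ((n : ℝ) * θ) = 0 := cos_nθ_zero hn
  set v : Fin n → ℝ := fun i => Real.cos (i * θ) with hv
  have hv0 : v ≠ 0 := by
    intro h
    have : v ⟨0, by omega⟩ = 0 := by rw [h]; rfl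
    simp [hv] at this
  have hmul : (Matrix.of fun i j : Fin n => Pch i j).mulVec v = lam • v := by
    funext i
    have hsum : (Matrix.of fun i j : Fin n => Pch i j).mulVec v i
        = ∑ j : Fin n, Pch i j * v j := by
      simp [Matrix.mulVec, dotProduct]
    rw [hsum]
    rcases Nat.eq_zero_or_pos (i : ℕ) with hi | hi
    · -- row 0
      have h2 : ∀ j : Fin n, Pch i j * v j = if (j : ℕ) = 1 then v j else 0 := by
        intro j
        simp only [Pch, hi, if_pos rfl]
        split_ifs <;> ring
      rw [Finset.sum_congr rfl (fun j _ => h2 j), sum_ite_val]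
      have hiθ : ((i : ℕ) : ℝ) * θ = 0 := by rw [hi]; simp
      split_ifs with h1
      · simp only [Pi.smul_apply, hv, smul_eq_mul, hiθ]
        norm_num
        rfl
      · -- n = 1
        have hn1 : n = 1 := by omega
        have : Real.cos θ = 0 := by
          have := hnθ
          rw [hn1] at this
          simpa using this
        simp only [Pi.smul_apply, hv, smul_eq_mul, hiθ, hlam, this]
        norm_num
    · -- row m ≥ 1
      set m : ℕ := (i : ℕ) with hm
      have him : i.val ≠ 0 := by omega
      have h2 : ∀ j : Fin n, Pch i j * v j
          = (if (j : ℕ) = m - 1 then (1/2) * v j else 0)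
            + (if (j : ℕ) = m + 1 then (1/2) * v j else 0) := by
        intro j
        simp only [Pch, if_neg him]
        rcases eq_or_ne (j : ℕ) (m - 1) with h | h <;>
          rcases eq_or_ne (j : ℕ) (m + 1) with h' | h'
        · omega
        · rw [if_pos (Or.inl h), if_pos h, if_neg h']; ring
        · rw [if_pos (Or.inr h'), if_neg h, if_pos h']; ring
        · rw [if_neg (by tauto), if_neg h, if_neg h']; ring
      rw [Finset.sum_congr rfl (fun j _ => h2 j), Finset.sum_add_distrib,
        sum_ite_val, sum_ite_val]
      have hm1 : m - 1 < n := by omega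
      rw [dif_pos hm1]
      have hcast : ((m - 1 : ℕ) : ℝ) = (m : ℝ) - 1 := by
        have : 1 ≤ m := hi
        push_cast [this]
        ring
      have hva : v ⟨m - 1, hm1⟩ = Real.cos ((m : ℝ) * θ - θ) := by
        simp only [hv]
        congr 1
        rw [hcast]; ring
      have key : ∀ x : ℝ, Real.cos (x - θ) + Real.cos (x + θ)
          = 2 * Real.cos θ * Real.cos x := by
        intro x
        rw [Real.cos_sub, Real.cos_add]; ring
      split_ifs with h1
      · -- interior row
        have hvb : v ⟨m + 1, h1⟩ = Real.cos ((m : ℝ) * θ + θ) := by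
          simp only [hv]
          congr 1
          push_cast
          ring
        rw [hva, hvb]
        simp only [Pi.smul_apply, hv, smul_eq_mul, hlam]
        have := key ((m : ℝ) * θ)
        linarith
      · -- last row : m + 1 = n
        have hmn : m + 1 = n := by omega
        have hz : Real.cos ((m : ℝ) * θ + θ) = 0 := by
          have : ((n : ℝ)) * θ = (m : ℝ) * θ + θ := by
            rw [← hmn]; push_cast; ring
          rw [← this]; exact hnθ
        rw [hva]
        simp only [Pi.smul_apply, hv, smul_eq_mul, hlam]
        have := key ((m : ℝ) * θ)
        linarith
  rw [spectrum.mem_iff]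
  intro hu
  rw [Matrix.isUnit_iff_isUnit_det] at hu
  have hdet : (algebraMap ℝ (Matrix (Fin n) (Fin n) ℝ) lam
      - Matrix.of fun i j : Fin n => Pch i j).det = 0 := by
    rw [← Matrix.exists_mulVec_eq_zero_iff]
    refine ⟨v, hv0, ?_⟩
    rw [Matrix.sub_mulVec, hmul]
    have halg : (algebraMap ℝ (Matrix (Fin n) (Fin n) ℝ) lam).mulVec v = lam • v := by
      rw [Algebra.algebraMap_eq_smul_one, Matrix.smul_mulVec, Matrix.one_mulVec]
    rw [halg, sub_self]
  rw [hdet] at hu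
  exact (isUnit_iff_ne_zero.mp hu) rfl

lemma cos_inj_aux {n : ℕ} (hn : 1 ≤ n) : ∀ k l : ℕ, k < n → l < n →
    Real.cos ((2 * k + 1) * π / (2 * n)) = Real.cos ((2 * l + 1) * π / (2 * n)) →
      k = l := by
  intro k l hk hl hcos
  have hn0 : (0 : ℝ) < n := by exact_mod_cast Nat.pos_of_ne_zero (by omega)
  have hmem : ∀ m : ℕ, m < n → (2 * m + 1) * π / (2 * n) ∈ Set.Icc 0 π := by
    intro m hm
    constructor
    · positivity
    · rw [div_le_iff₀ (by positivity)]
      have h1 : (2 * (m : ℝ) + 1) ≤ 2 * n := by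
        have : (m : ℝ) + 1 ≤ n := by exact_mod_cast hm
        linarith
      nlinarith [Real.pi_pos]
  have := Real.injOn_cos (hmem k hk) (hmem l hl) hcos
  have hπ : π ≠ 0 := Real.pi_ne_zero
  field_simp at this
  exact_mod_cast (by linarith : (k : ℝ) = l)

open Polynomial in
/-- The spectrum of the `n × n` restriction of the reflecting simple random walk kernel
is exactly the set of the `n` distinct values `cos((2k+1)π/(2n))`, `k = 0, …, n-1`. -/
theorem spectrum_restriction_reflecting_walk (n : ℕ) (hn : 1 ≤ n) :
    spectrum ℝ (Matrix.of fun i j : Fin n => Pch i j)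
        = {x : ℝ | ∃ k : ℕ, k < n ∧ x = Real.cos ((2 * k + 1) * π / (2 * n))} ∧
      ∀ k l : ℕ, k < n → l < n →
        Real.cos ((2 * k + 1) * π / (2 * n)) = Real.cos ((2 * l + 1) * π / (2 * n)) →
          k = l := by
  refine ⟨?_, cos_inj_aux hn⟩
  set M : Matrix (Fin n) (Fin n) ℝ := Matrix.of fun i j : Fin n => Pch i j with hM
  set p : ℝ[X] := M.charpoly with hp
  have hpmono : p.Monic := M.charpoly_monic
  have hp0 : p ≠ 0 := hpmono.ne_zero
  have hdeg : p.natDegree = n := by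
    rw [hp, Matrix.charpoly_natDegree_eq_dim, Fintype.card_fin]
  -- the finset of candidate eigenvalues
  set T : Finset ℝ :=
    (Finset.range n).image (fun k : ℕ => Real.cos ((2 * (k : ℝ) + 1) * π / (2 * n))) with hT
  have hTcard : T.card = n := by
    rw [hT, Finset.card_image_of_injOn, Finset.card_range]
    intro k hk l hl h
    exact cos_inj_aux hn k l (Finset.mem_range.mp hk) (Finset.mem_range.mp hl) h
  have hTsub : T ⊆ p.roots.toFinset := by
    intro x hx
    rw [hT, Finset.mem_image] at hx
    obtain ⟨k, hk, rfl⟩ := hx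
    rw [Multiset.mem_toFinset, Polynomial.mem_roots hp0]
    exact (mem_spectrum_iff_eval_charpoly M _).mp (cos_eig hn k (Finset.mem_range.mp hk))
  have hroots_card : p.roots.toFinset.card ≤ n := by
    calc p.roots.toFinset.card ≤ Multiset.card p.roots := Multiset.toFinset_card_le _
      _ ≤ p.natDegree := Polynomial.card_roots' p
      _ = n := hdeg
  ext x
  simp only [Set.mem_setOf_eq]
  constructor
  · intro hx
    by_contra hcon
    push_neg at hcon
    have hxT : x ∉ T := by
      intro hxT
      rw [hT, Finset.mem_image] at hxT
      obtain ⟨k, hk, hkx⟩ := hxT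
      exact hcon k (Finset.mem_range.mp hk) hkx.symm
    have hxr : x ∈ p.roots.toFinset := by
      rw [Multiset.mem_toFinset, Polynomial.mem_roots hp0]
      exact (mem_spectrum_iff_eval_charpoly M x).mp hx
    have : insert x T ⊆ p.roots.toFinset := Finset.insert_subset hxr hTsub
    have hcard := Finset.card_le_card this
    rw [Finset.card_insert_of_notMem hxT, hTcard] at hcard
    omega
  · rintro ⟨k, hk, rfl⟩
    exact cos_eig hn k hk
end

section
/- For every continuous function f : ℝ → ℝ, the averages (1/n) Σ_{k=0}^{n−1} f(cos((2k+1)π/(2n))) converge, as n → ∞, to (1/π) ∫_{−1}^{1} f(x) / √(1 − x²) dx. Equivalently, the uniform probability measure on the roots {cos((2k+1)π/(2n)) : k = 0,…,n−1} of the n-th Chebyshev polynomial converges weakly to the arcsine distribution with density 1/(π√(1−x²)) on [−1,1]. -/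
open Real Filter MeasureTheory Set

lemma aux_sqrt_singular_integrable (f : ℝ → ℝ) (hf : Continuous f) :
    IntervalIntegrable (fun x => f x / Real.sqrt (1 - x ^ 2)) volume (-1) 1 := by
  obtain ⟨C, hC0, hC⟩ : ∃ C, 0 ≤ C ∧ ∀ x ∈ Icc (-1:ℝ) 1, |f x| ≤ C := by
    obtain ⟨C, hC⟩ :=
      (isCompact_Icc (a := (-1:ℝ)) (b := 1)).exists_bound_of_continuousOn hf.continuousOn
    exact ⟨max C 0, le_max_right _ _, fun x hx => (hC x hx).trans (le_max_left _ _)⟩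
  have hA : IntervalIntegrable (fun x : ℝ => (1 - x) ^ (-(1/2) : ℝ)) volume (-1) 1 := by
    have := (intervalIntegral.intervalIntegrable_rpow' (a := (0:ℝ)) (b := 2) (r := -(1/2))
      (by norm_num)).comp_sub_left 1
    norm_num at this
    exact this.symm
  have hB : IntervalIntegrable (fun x : ℝ => (1 + x) ^ (-(1/2) : ℝ)) volume (-1) 1 := by
    have := (intervalIntegral.intervalIntegrable_rpow' (a := (0:ℝ)) (b := 2) (r := -(1/2))
      (by norm_num)).comp_add_left 1
    norm_num at this
    exact this
  have hbound : IntervalIntegrable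
      (fun x : ℝ => C * ((1 - x) ^ (-(1/2) : ℝ) + (1 + x) ^ (-(1/2) : ℝ))) volume (-1) 1 :=
    (hA.add hB).const_mul C
  refine hbound.mono_fun' ?_ ?_
  · exact ((hf.measurable.div ((continuous_const.sub
      ((continuous_pow 2))).sqrt.measurable)).aestronglyMeasurable).restrict
  · rw [Set.uIoc_of_le (by norm_num : (-1:ℝ) ≤ 1)]
    refine (ae_restrict_mem measurableSet_Ioc).mono fun x hx => ?_
    have hx1 : (0:ℝ) ≤ 1 - x := by linarith [hx.2]
    have hx2 : (0:ℝ) < 1 + x := by linarith [hx.1]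
    have hrw : ∀ y : ℝ, 0 ≤ y → y ^ (-(1/2) : ℝ) = 1 / Real.sqrt y := by
      intro y hy
      rw [Real.rpow_neg hy, Real.sqrt_eq_rpow]
      exact (one_div _).symm
    have hfx : |f x| ≤ C := hC x ⟨le_of_lt hx.1, hx.2⟩
    have hsq : Real.sqrt (1 - x ^ 2) = Real.sqrt (1 - x) * Real.sqrt (1 + x) := by
      rw [← Real.sqrt_mul hx1]
      ring_nf
    dsimp only
    rw [Real.norm_eq_abs, abs_div, abs_of_nonneg (Real.sqrt_nonneg _), hsq,
      hrw _ hx1, hrw _ hx2.le, mul_add]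
    set a := Real.sqrt (1 - x) with ha
    set b := Real.sqrt (1 + x) with hb
    have ha0 : 0 ≤ a := Real.sqrt_nonneg _
    have hb0 : 0 < b := Real.sqrt_pos.mpr hx2
    rcases eq_or_lt_of_le ha0 with h0 | hpos
    · rw [← h0, zero_mul, div_zero]
      positivity
    · -- a > 0, b > 0
      have h1 : |f x| / (a * b) ≤ C / (a * b) := by gcongr
      refine h1.trans ?_
      have hab : 0 < a * b := mul_pos hpos hb0
      rcases le_total 0 x with hx0 | hx0
      · -- then b ≥ 1, so C/(a*b) ≤ C/a = C*(1/a)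
        have hb1 : (1:ℝ) ≤ b := by
          have h := Real.sqrt_le_sqrt (show (1:ℝ) ≤ 1 + x by linarith)
          rwa [Real.sqrt_one] at h
        have : C / (a * b) ≤ C / a := by
          apply div_le_div_of_nonneg_left hC0 hpos
          nlinarith
        refine this.trans ?_
        rw [div_eq_mul_one_div]
        nlinarith [mul_nonneg hC0 (le_of_lt (one_div_pos.mpr hb0))]
      · have ha1 : (1:ℝ) ≤ a := by
          have h := Real.sqrt_le_sqrt (show (1:ℝ) ≤ 1 - x by linarith)
          rwa [Real.sqrt_one] at h
        have : C / (a * b) ≤ C / b := by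
          apply div_le_div_of_nonneg_left hC0 hb0
          nlinarith
        refine this.trans ?_
        rw [div_eq_mul_one_div]
        nlinarith [mul_nonneg hC0 (le_of_lt (one_div_pos.mpr hpos))]

lemma aux_cos_substitution (f : ℝ → ℝ) (hf : Continuous f) :
    ∫ θ in (0:ℝ)..π, f (Real.cos θ) = ∫ x in (-1:ℝ)..1, f x / Real.sqrt (1 - x ^ 2) := by
  obtain ⟨C, hC0, hC⟩ : ∃ C, 0 ≤ C ∧ ∀ x ∈ Icc (-1:ℝ) 1, |f x| ≤ C := by
    obtain ⟨C, hC⟩ :=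
      (isCompact_Icc (a := (-1:ℝ)) (b := 1)).exists_bound_of_continuousOn hf.continuousOn
    exact ⟨max C 0, le_max_right _ _, fun x hx => (hC x hx).trans (le_max_left _ _)⟩
  set g : ℝ → ℝ := fun x => f x / Real.sqrt (1 - x ^ 2) with hg
  have hmin : min (0:ℝ) π = 0 := min_eq_left pi_pos.le
  have hmax : max (0:ℝ) π = π := max_eq_right pi_pos.le
  have himg : Real.cos '' Ioo (0:ℝ) π ⊆ Ioo (-1:ℝ) 1 := by
    rintro y ⟨θ, hθ, rfl⟩
    have hs : 0 < Real.sin θ := Real.sin_pos_of_pos_of_lt_pi hθ.1 hθ.2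
    have hpyth := Real.sin_sq_add_cos_sq θ
    constructor <;> nlinarith [mul_pos hs hs]
  have key : ∫ x in (0:ℝ)..π, (fun θ => -Real.sin θ) x • (g ∘ Real.cos) x
      = ∫ u in (Real.cos 0)..(Real.cos π), g u := by
    apply intervalIntegral.integral_comp_smul_deriv''' Real.continuous_cos.continuousOn
    · intro x _
      exact (Real.hasDerivAt_cos x).hasDerivWithinAt
    · rw [hmin, hmax]
      refine ContinuousOn.mono ?_ himg
      apply ContinuousOn.div hf.continuousOn
        ((continuous_const.sub (continuous_pow 2)).sqrt.continuousOn)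
      intro x hx
      refine (Real.sqrt_ne_zero' (x := 1 - x ^ 2)).mpr ?_
      nlinarith [hx.1, hx.2]
    · -- IntegrableOn g (cos '' [[0, π]])
      have h1 : Real.cos '' uIcc (0:ℝ) π ⊆ Icc (-1:ℝ) 1 := by
        rintro y ⟨θ, _, rfl⟩
        exact ⟨Real.neg_one_le_cos θ, Real.cos_le_one θ⟩
      have h2 : IntegrableOn g (Icc (-1:ℝ) 1) volume := by
        have := (aux_sqrt_singular_integrable f hf)
        rw [intervalIntegrable_iff'] at this
        rwa [Set.uIcc_of_le (by norm_num : (-1:ℝ) ≤ 1)] at this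
      exact h2.mono_set h1
    · -- IntegrableOn (fun x => (-sin x) • (g ∘ cos) x) [[0, π]]
      rw [Set.uIcc_of_le pi_pos.le]
      have hmeas : Measurable fun x : ℝ =>
          (fun θ => -Real.sin θ) x • (g ∘ Real.cos) x := by
        apply Real.continuous_sin.neg.measurable.smul
        exact ((hf.comp Real.continuous_cos).measurable.div
          ((continuous_const.sub ((Real.continuous_cos.pow 2))).sqrt.measurable))
      refine Integrable.mono' (g := fun _ : ℝ => C)
        (integrableOn_const measure_Icc_lt_top.ne)
        hmeas.aestronglyMeasurable.restrict ?_
      refine (ae_restrict_iff' measurableSet_Icc).mpr (Filter.Eventually.of_forall ?_)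
      intro x hx
      have hsn : 0 ≤ Real.sin x := Real.sin_nonneg_of_nonneg_of_le_pi hx.1 hx.2
      have hsq : Real.sqrt (1 - Real.cos x ^ 2) = Real.sin x := by
        rw [← Real.sin_sq x, Real.sqrt_sq hsn]
      have hfc : |f (Real.cos x)| ≤ C :=
        hC _ ⟨Real.neg_one_le_cos x, Real.cos_le_one x⟩
      simp only [g, Function.comp, smul_eq_mul, hsq, Real.norm_eq_abs]
      rcases eq_or_lt_of_le hsn with h0 | hpos
      · rw [← h0]
        simpa using hC0
      · rw [neg_mul, abs_neg, mul_div_assoc', mul_comm, mul_div_assoc,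
          div_self (ne_of_gt hpos), mul_one]
        exact hfc
  -- identify the left side with ∫ f(cos θ)
  have hleft : ∫ x in (0:ℝ)..π, (fun θ => -Real.sin θ) x • (g ∘ Real.cos) x
      = - ∫ θ in (0:ℝ)..π, f (Real.cos θ) := by
    rw [← intervalIntegral.integral_neg]
    apply intervalIntegral.integral_congr_ae
    have hne : ∀ᵐ x : ℝ ∂volume, x ≠ π := by
      have : (volume : Measure ℝ) {π} = 0 := measure_singleton π
      rw [ae_iff]
      simpa [Set.setOf_eq_eq_singleton] using this

    refine hne.mono fun x hxπ hx => ?_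
    rw [Set.uIoc_of_le pi_pos.le] at hx
    have hs : 0 < Real.sin x := Real.sin_pos_of_pos_of_lt_pi hx.1 (lt_of_le_of_ne hx.2 hxπ)
    have hsq : Real.sqrt (1 - Real.cos x ^ 2) = Real.sin x := by
      rw [← Real.sin_sq x, Real.sqrt_sq hs.le]
    simp only [g, Function.comp, smul_eq_mul, hsq]
    field_simp
  rw [hleft, Real.cos_zero, Real.cos_pi] at key
  rw [intervalIntegral.integral_symm (-1 : ℝ) 1] at key
  linarith [key]

lemma aux_riemann_midpoint (g : ℝ → ℝ) (hg : Continuous g) :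
    Tendsto
      (fun n : ℕ => (1 / (n : ℝ)) * ∑ k ∈ Finset.range n, g ((2 * k + 1) * π / (2 * n)))
      atTop (nhds ((1 / π) * ∫ θ in (0:ℝ)..π, g θ)) := by
  rw [Metric.tendsto_atTop]
  intro ε hε
  have huc := (isCompact_Icc (a := (0:ℝ)) (b := π)).uniformContinuousOn_of_continuous
    hg.continuousOn
  rw [Metric.uniformContinuousOn_iff] at huc
  obtain ⟨δ, hδ, hδ'⟩ := huc (ε/2) (by positivity)
  obtain ⟨N, hN⟩ := exists_nat_gt (π/δ)
  refine ⟨max N 1, fun n hn => ?_⟩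
  have hn1 : 1 ≤ n := le_trans (le_max_right N 1) hn
  have hnN : (N:ℝ) ≤ (n:ℝ) := Nat.cast_le.mpr (le_trans (le_max_left N 1) hn)
  have hn0 : (0:ℝ) < (n:ℝ) := by exact_mod_cast hn1
  have hπn : π / n < δ := by
    rw [div_lt_iff₀ hn0]
    rw [div_lt_iff₀ hδ] at hN
    nlinarith [pi_pos]
  set a : ℕ → ℝ := fun k => k * (π / n) with ha
  set m : ℕ → ℝ := fun k => (2 * k + 1) * π / (2 * n) with hm
  have hstep : ∀ k : ℕ, a (k+1) - a k = π / n := by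
    intro k; simp only [ha]; push_cast; ring
  have hsplit : ∫ θ in (0:ℝ)..π, g θ = ∑ k ∈ Finset.range n, ∫ θ in a k..a (k+1), g θ := by
    rw [intervalIntegral.sum_integral_adjacent_intervals
      (fun k _ => hg.intervalIntegrable _ _)]
    have h0 : a 0 = 0 := by simp [ha]
    have hn' : a n = π := by
      simp only [ha]; field_simp
    rw [h0, hn']
  -- pointwise bound on each interval
  have hak : ∀ k : ℕ, k < n → a k ∈ Icc (0:ℝ) π ∧ a (k+1) ∈ Icc (0:ℝ) π := by
    intro k hk
    have hk1 : (k:ℝ) ≤ n := by exact_mod_cast hk.le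
    have hk2 : ((k:ℝ)+1) ≤ n := by exact_mod_cast hk
    constructor
    · constructor
      · positivity
      · simp only [ha]
        rw [← mul_div_assoc, div_le_iff₀ hn0]
        nlinarith [pi_pos, hk1]
    · constructor
      · positivity
      · simp only [ha]
        push_cast
        rw [← mul_div_assoc, div_le_iff₀ hn0]
        nlinarith [pi_pos, hk2]
  have hn0' : (n:ℝ) ≠ 0 := ne_of_gt hn0
  have hp2 : (0:ℝ) < π / (2*n) := by positivity
  have hm1 : ∀ k : ℕ, m k - a k = π / (2*n) := by
    intro k; simp only [hm, ha]; field_simp; ring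
  have hm2 : ∀ k : ℕ, a (k+1) - m k = π / (2*n) := by
    intro k; simp only [hm, ha]; push_cast; field_simp; ring
  have hmk : ∀ k : ℕ, k < n → m k ∈ Icc (a k) (a (k+1)) := by
    intro k _
    exact ⟨by linarith [hm1 k], by linarith [hm2 k]⟩
  have hint : ∀ k ∈ Finset.range n,
      ‖∫ θ in a k..a (k+1), (g (m k) - g θ)‖ ≤ (ε/2) * (π / n) := by
    intro k hk
    rw [Finset.mem_range] at hk
    have hle : a k ≤ a (k+1) := by
      have h1 := hstep k
      have h2 : (0:ℝ) < π / n := by positivity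
      linarith
    have hbd : ∀ θ ∈ Set.uIoc (a k) (a (k+1)), ‖g (m k) - g θ‖ ≤ ε/2 := by
      intro θ hθ
      rw [Set.uIoc_of_le hle] at hθ
      have hmem := hmk k hk
      have haks := hak k hk
      have hmIcc : m k ∈ Icc (0:ℝ) π :=
        ⟨le_trans (haks.1.1) hmem.1, le_trans hmem.2 haks.2.2⟩
      have hθIcc : θ ∈ Icc (0:ℝ) π :=
        ⟨le_trans haks.1.1 hθ.1.le, le_trans hθ.2 haks.2.2⟩
      have hdist : dist (m k) θ < δ := by
        rw [Real.dist_eq]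
        have h1 := hstep k
        have : |m k - θ| ≤ π / n := by
          rw [abs_le]
          constructor <;> [linarith [hmem.1, hθ.2]; linarith [hmem.2, hθ.1.le]]
        linarith
      have := hδ' (m k) hmIcc θ hθIcc hdist
      rw [Real.dist_eq] at this
      exact this.le
    calc ‖∫ θ in a k..a (k+1), (g (m k) - g θ)‖
        ≤ (ε/2) * |a (k+1) - a k| :=
          intervalIntegral.norm_integral_le_of_norm_le_const hbd
      _ = (ε/2) * (π / n) := by
          rw [hstep k, abs_of_pos (by positivity)]
  -- identify the difference
  have hdiff : (1 / (n : ℝ)) * (∑ k ∈ Finset.range n, g (m k)) - (1/π) * ∫ θ in (0:ℝ)..π, g θ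
      = (1/π) * ∑ k ∈ Finset.range n, ∫ θ in a k..a (k+1), (g (m k) - g θ) := by
    have hterm : ∀ k ∈ Finset.range n,
        (∫ θ in a k..a (k+1), (g (m k) - g θ))
          = (π / n) * g (m k) - ∫ θ in a k..a (k+1), g θ := by
      intro k _
      rw [intervalIntegral.integral_sub (intervalIntegrable_const) (hg.intervalIntegrable _ _),
        intervalIntegral.integral_const, hstep k, smul_eq_mul]
    rw [Finset.sum_congr rfl hterm, Finset.sum_sub_distrib, ← Finset.mul_sum, ← hsplit]
    have hπ : (π:ℝ) ≠ 0 := Real.pi_ne_zero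
    field_simp
  rw [Real.dist_eq]
  have : |(1 / (n : ℝ)) * (∑ k ∈ Finset.range n, g (m k)) - (1/π) * ∫ θ in (0:ℝ)..π, g θ|
      ≤ ε / 2 := by
    rw [hdiff, abs_mul, abs_of_pos (by positivity : (0:ℝ) < 1/π)]
    have hsum : |∑ k ∈ Finset.range n, ∫ θ in a k..a (k+1), (g (m k) - g θ)|
        ≤ (ε/2) * π := by
      calc |∑ k ∈ Finset.range n, ∫ θ in a k..a (k+1), (g (m k) - g θ)|
          ≤ ∑ k ∈ Finset.range n, |∫ θ in a k..a (k+1), (g (m k) - g θ)| :=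
            Finset.abs_sum_le_sum_abs _ _
        _ ≤ ∑ _k ∈ Finset.range n, (ε/2) * (π / n) :=
            Finset.sum_le_sum (fun k hk => hint k hk)
        _ = n * ((ε/2) * (π / n)) := by rw [Finset.sum_const, Finset.card_range, nsmul_eq_mul]
        _ = (ε/2) * π := by field_simp
    calc (1/π) * |∑ k ∈ Finset.range n, ∫ θ in a k..a (k+1), (g (m k) - g θ)|
        ≤ (1/π) * ((ε/2) * π) := by
          apply mul_le_mul_of_nonneg_left hsum (by positivity)
      _ = ε / 2 := by field_simp
  calc |(1 / (n : ℝ)) * (∑ k ∈ Finset.range n, g ((2 * k + 1) * π / (2 * n)))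
        - (1/π) * ∫ θ in (0:ℝ)..π, g θ| ≤ ε/2 := this
    _ < ε := by linarith

/-- The uniform measure on the Chebyshev roots `cos((2k+1)π/(2n))`, `k = 0, …, n-1`,
converges weakly to the arcsine distribution: for every continuous `f : ℝ → ℝ`,
`(1/n) ∑_{k<n} f(cos((2k+1)π/(2n))) → (1/π) ∫_{-1}^{1} f x / √(1-x²) dx`. -/
theorem chebyshev_roots_weak_convergence_arcsine (f : ℝ → ℝ) (hf : Continuous f) :
    Tendsto
      (fun n : ℕ =>
        (1 / (n : ℝ)) * ∑ k ∈ Finset.range n, f (Real.cos ((2 * k + 1) * π / (2 * n))))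
      atTop
      (nhds ((1 / π) * ∫ x in (-1 : ℝ)..1, f x / Real.sqrt (1 - x ^ 2))) := by
  have h := aux_riemann_midpoint (fun θ => f (Real.cos θ)) (hf.comp Real.continuous_cos)
  rwa [aux_cos_substitution f hf] at h
end

section
/- Let P_ch be the reflecting simple random walk kernel and define p_t(i,j) recursively by p_0(i,j) = δ_{ij} and p_{t+1}(i,j) = Σ_k p_t(i,k) P_ch(k,j). Let π_0 = 1 and π_j = 2 for j ≥ 1, and let T_k denote the k-th Chebyshev polynomial of the first kind. Then for all t, i, j: p_t(i,j) = π_j · (1/π) ∫_{−1}^{1} λ^t T_i(λ) T_j(λ) / √(1 − λ²) dλ. -/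
open Real

open Real MeasureTheory intervalIntegral Polynomial Polynomial.Chebyshev

lemma intInt_one : IntervalIntegrable (fun x : ℝ => 1 / Real.sqrt (1 - x^2)) volume (-1) 1 := by
  apply intervalIntegrable_deriv_of_nonneg (g := arcsin)
  · exact Real.continuous_arcsin.continuousOn
  · intro x hx
    norm_num at hx
    exact Real.hasDerivAt_arcsin hx.1.ne' hx.2.ne
  · intro x hx; positivity

lemma intInt_poly (q : Polynomial ℝ) :
    IntervalIntegrable (fun l : ℝ => q.eval l / Real.sqrt (1 - l^2)) volume (-1) 1 := by
  obtain ⟨C, hC⟩ := (isCompact_Icc (a := (-1:ℝ)) (b := 1)).exists_bound_of_continuousOn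
    (q.continuous.continuousOn)
  have hC0 : 0 ≤ C := le_trans (norm_nonneg _) (hC 0 (by norm_num))
  apply (intInt_one.const_mul C).mono_fun
  · exact (q.continuous.measurable.div
      ((continuous_const.sub (continuous_pow 2)).sqrt.measurable)).aestronglyMeasurable.restrict
  · apply MeasureTheory.ae_restrict_of_forall_mem measurableSet_uIoc
    intro x hx
    rw [Set.uIoc_of_le (by norm_num : (-1:ℝ) ≤ 1)] at hx
    have hx' : x ∈ Set.Icc (-1:ℝ) 1 := ⟨hx.1.le, hx.2⟩
    have hs := Real.sqrt_nonneg (1 - x^2)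
    simp only [Real.norm_eq_abs]
    rcases eq_or_lt_of_le hs with h0 | h0
    · simp [← h0]
    · rw [abs_div, abs_of_pos h0, abs_mul, abs_of_nonneg hC0, abs_div, abs_one, abs_of_pos h0,
        ← mul_div_assoc, mul_one]
      exact div_le_div_of_nonneg_right (by simpa using hC x hx') h0.le

noncomputable def Iv (q : Polynomial ℝ) : ℝ := ∫ l in (-1:ℝ)..1, q.eval l / Real.sqrt (1 - l^2)

lemma Iv_T (n : ℤ) : Iv (Polynomial.Chebyshev.T ℝ n) = if n = 0 then π else 0 := by
  unfold Iv
  rcases eq_or_ne n 0 with rfl | hn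
  · simp only [Polynomial.Chebyshev.T_zero, Polynomial.eval_one, if_true]
    rw [integral_eq_sub_of_hasDerivAt_of_tendsto (f := arcsin) (by norm_num)
      (fun x hx => Real.hasDerivAt_arcsin hx.1.ne' hx.2.ne) intInt_one
      ((Real.continuous_arcsin.tendsto (-1)).mono_left nhdsWithin_le_nhds)
      ((Real.continuous_arcsin.tendsto 1).mono_left nhdsWithin_le_nhds)]
    simp [Real.arcsin_one, Real.arcsin_neg_one]
  · rw [if_neg hn]
    have hnR : (n : ℝ) ≠ 0 := Int.cast_ne_zero.mpr hn
    have hcont : Continuous fun l : ℝ => -Real.sin ((n:ℝ) * arccos l) / n :=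
      ((Real.continuous_sin.comp (continuous_const.mul Real.continuous_arccos)).neg).div_const _
    rw [integral_eq_sub_of_hasDerivAt_of_tendsto
      (f := fun l : ℝ => -Real.sin ((n:ℝ) * Real.arccos l) / n) (by norm_num)
      (fun x hx => ?_) (intInt_poly _)
      (((hcont.tendsto (-1)).mono_left nhdsWithin_le_nhds).congr' (by rfl))
      (((hcont.tendsto 1).mono_left nhdsWithin_le_nhds))]
    · rw [Real.arccos_one, Real.arccos_neg_one]
      have h1 : Real.sin ((n:ℝ) * π) = 0 := Real.sin_int_mul_pi n
      simp [h1]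
    · have h1 := Real.hasDerivAt_arccos hx.1.ne' hx.2.ne
      have h2 := h1.const_mul (n:ℝ)
      have h3 := (Real.hasDerivAt_sin ((n:ℝ) * Real.arccos x)).comp x h2
      have h4 := (h3.neg).div_const (n:ℝ)
      convert h4 using 1
      case e'_4 => rfl
      case e'_8 => rfl
      have hT : (Polynomial.Chebyshev.T ℝ n).eval x = Real.cos ((n:ℝ) * Real.arccos x) := by
        conv_lhs => rw [← Real.cos_arccos hx.1.le hx.2.le]
        exact Polynomial.Chebyshev.T_real_cos (Real.arccos x) n
      have hs : Real.sqrt (1 - x^2) ≠ 0 := by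
        have : (0:ℝ) < 1 - x^2 := by nlinarith [hx.1, hx.2]
        positivity
      rw [hT]
      field_simp

lemma Iv_add (q r : Polynomial ℝ) : Iv (q + r) = Iv q + Iv r := by
  unfold Iv
  simp_rw [Polynomial.eval_add, add_div]
  exact intervalIntegral.integral_add (intInt_poly q) (intInt_poly r)

lemma Iv_two_mul (q : Polynomial ℝ) : Iv (2 * q) = 2 * Iv q := by
  unfold Iv
  simp_rw [Polynomial.eval_mul, Polynomial.eval_ofNat, mul_div_assoc]
  exact intervalIntegral.integral_const_mul 2 _

lemma Iv_two_X (j : ℤ) (q : Polynomial ℝ) :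
    2 * Iv (q * (Polynomial.X * Polynomial.Chebyshev.T ℝ j)) =
      Iv (q * Polynomial.Chebyshev.T ℝ (j + 1)) + Iv (q * Polynomial.Chebyshev.T ℝ (j - 1)) := by
  have h := Polynomial.Chebyshev.T_mul_T ℝ 1 j
  rw [Polynomial.Chebyshev.T_one] at h
  have h2 : Polynomial.Chebyshev.T ℝ (1 - j) = Polynomial.Chebyshev.T ℝ (j - 1) := by
    rw [← Polynomial.Chebyshev.T_neg]; ring_nf
  rw [h2, (by ring : (1:ℤ) + j = j + 1)] at h
  calc 2 * Iv (q * (Polynomial.X * Polynomial.Chebyshev.T ℝ j))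
      = Iv (2 * (q * (Polynomial.X * Polynomial.Chebyshev.T ℝ j))) := (Iv_two_mul _).symm
    _ = Iv (q * Polynomial.Chebyshev.T ℝ (j + 1) + q * Polynomial.Chebyshev.T ℝ (j - 1)) := by
        congr 1; linear_combination q * h
    _ = _ := Iv_add _ _

lemma Iv_TT (i j : ℕ) :
    Iv (Polynomial.Chebyshev.T ℝ i * Polynomial.Chebyshev.T ℝ j) =
      if i = j then (if i = 0 then π else π / 2) else 0 := by
  have h := Polynomial.Chebyshev.T_mul_T ℝ (i : ℤ) (j : ℤ)
  have key : 2 * Iv (Polynomial.Chebyshev.T ℝ i * Polynomial.Chebyshev.T ℝ j) =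
      Iv (Polynomial.Chebyshev.T ℝ ((i:ℤ) + j)) + Iv (Polynomial.Chebyshev.T ℝ ((i:ℤ) - j)) := by
    rw [← Iv_add, ← Iv_two_mul]
    congr 1
    linear_combination h
  rw [Iv_T, Iv_T] at key
  rcases eq_or_ne i j with rfl | hij
  · rcases eq_or_ne i 0 with rfl | hi
    · rw [if_pos rfl, if_pos rfl]
      rw [if_pos (by norm_num), if_pos (by norm_num)] at key
      linarith
    · rw [if_neg (by exact_mod_cast by omega : (i:ℤ) + i ≠ 0), if_pos (by ring)] at key
      rw [if_pos rfl, if_neg hi]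
      linarith
  · rw [if_neg (by exact_mod_cast by omega : (i:ℤ) + j ≠ 0),
      if_neg (by intro hh; apply hij; exact_mod_cast sub_eq_zero.mp hh)] at key
    rw [if_neg hij]
    linarith


open Real MeasureTheory intervalIntegral Polynomial Polynomial.Chebyshev

/-- Karlin–McGregor representation of the `t`-step transition probabilities of the
reflecting simple random walk via Chebyshev polynomials of the first kind:
`p_t(i,j) = π_j (1/π) ∫_{-1}^{1} λ^t T_i(λ) T_j(λ) / √(1-λ²) dλ`,
with `π_0 = 1` and `π_j = 2` for `j ≥ 1`. -/
theorem reflecting_walk_karlin_mcgregor_chebyshev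
    (p : ℕ → ℕ → ℕ → ℝ)
    (hp0 : ∀ i j : ℕ, p 0 i j = if i = j then 1 else 0)
    (hpstep : ∀ t i j : ℕ, p (t + 1) i j = ∑' k : ℕ, p t i k * Pch k j) :
    ∀ t i j : ℕ,
      p t i j = (if j = 0 then (1 : ℝ) else 2) * (1 / π) *
        ∫ l in (-1 : ℝ)..1,
          l ^ t * (Polynomial.Chebyshev.T ℝ i).eval l * (Polynomial.Chebyshev.T ℝ j).eval l
            / Real.sqrt (1 - l ^ 2) := by
  have key : ∀ t i j : ℕ, p t i j = (if j = 0 then (1 : ℝ) else 2) * (1 / π) *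
      Iv (Polynomial.X ^ t * T ℝ (i : ℤ) * T ℝ (j : ℤ)) := by
    intro t
    induction t with
    | zero =>
      intro i j
      rw [hp0, pow_zero, one_mul, Iv_TT]
      rcases eq_or_ne i j with rfl | hij
      · rcases eq_or_ne i 0 with rfl | hi
        · rw [if_pos rfl, if_pos rfl, if_pos rfl, if_pos rfl]
          field_simp
        · rw [if_pos rfl, if_pos rfl, if_neg hi, if_neg hi]
          field_simp
      · rw [if_neg hij, if_neg hij, mul_zero]
    | succ t ih =>
      intro i j
      rw [hpstep]
      have hsupp : ∀ k ∉ ({j - 1, j + 1} : Finset ℕ), p t i k * Pch k j = 0 := by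
        intro k hk
        simp only [Finset.mem_insert, Finset.mem_singleton, not_or] at hk
        have hz : Pch k j = 0 := by
          unfold Pch
          split_ifs with h1 h2 h3
          · exfalso; omega
          · rfl
          · exfalso; omega
          · rfl
        rw [hz, mul_zero]
      rw [tsum_eq_sum hsupp, Finset.sum_pair (by omega : j - 1 ≠ j + 1)]
      have hP2 : Pch (j + 1) j = 1 / 2 := by
        unfold Pch
        rw [if_neg (by omega), if_pos (Or.inl (by omega))]
      match j with
      | 0 =>
        have h0 : Pch (0 - 1) 0 = 0 := by unfold Pch; norm_num
        rw [h0, mul_zero, zero_add, hP2, ih]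
        rw [if_neg (by omega), if_pos rfl]
        have e0 : (Polynomial.X : Polynomial ℝ) ^ (t + 1) * T ℝ (i : ℤ) * T ℝ ((0:ℕ) : ℤ) =
            Polynomial.X ^ t * T ℝ (i : ℤ) * T ℝ ((1:ℕ) : ℤ) := by
          rw [Nat.cast_zero, Nat.cast_one, T_zero, T_one]; ring
        rw [e0]
        ring
      | 1 =>
        have h0 : Pch (1 - 1) 1 = 1 := by unfold Pch; norm_num
        simp only [show (1 - 1 : ℕ) = 0 from rfl, show (1 + 1 : ℕ) = 2 from rfl] at h0 hP2 ⊢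
        rw [h0, hP2, ih, ih]
        rw [if_pos rfl, if_neg (by omega), if_neg (by omega)]
        have hrec := Iv_two_X ((1:ℕ) : ℤ) (Polynomial.X ^ t * T ℝ (i : ℤ))
        rw [show ((1:ℕ) : ℤ) + 1 = ((2:ℕ) : ℤ) by norm_num,
          show ((1:ℕ) : ℤ) - 1 = ((0:ℕ) : ℤ) by norm_num] at hrec
        have e0 : (Polynomial.X : Polynomial ℝ) ^ (t + 1) * T ℝ (i : ℤ) * T ℝ ((1:ℕ) : ℤ) =
            Polynomial.X ^ t * T ℝ (i : ℤ) * (Polynomial.X * T ℝ ((1:ℕ) : ℤ)) := by ring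
        rw [e0]
        linear_combination (-(1 / π)) * hrec
      | (m + 2) =>
        have h0 : Pch (m + 2 - 1) (m + 2) = 1 / 2 := by
          unfold Pch
          rw [if_neg (by omega), if_pos (Or.inr (by omega))]
        rw [h0, hP2, ih, ih]
        rw [if_neg (by omega), if_neg (by omega), if_neg (by omega)]
        have hrec := Iv_two_X (((m + 2 : ℕ)) : ℤ) (Polynomial.X ^ t * T ℝ (i : ℤ))
        rw [show (((m + 2 : ℕ)) : ℤ) + 1 = ((m + 3 : ℕ) : ℤ) by push_cast; ring,
          show (((m + 2 : ℕ)) : ℤ) - 1 = ((m + 1 : ℕ) : ℤ) by push_cast; omega] at hrec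
        simp only [show (m + 2 - 1 : ℕ) = m + 1 from rfl, show (m + 2 + 1 : ℕ) = m + 3 from rfl] at h0 hP2 ⊢
        have e0 : (Polynomial.X : Polynomial ℝ) ^ (t + 1) * T ℝ (i : ℤ) * T ℝ ((m + 2 : ℕ) : ℤ) =
            Polynomial.X ^ t * T ℝ (i : ℤ) * (Polynomial.X * T ℝ ((m + 2 : ℕ) : ℤ)) := by ring
        rw [e0]
        linear_combination (-(1 / π)) * hrec
  intro t i j
  rw [key t i j]
  congr 1
  simp only [Iv, Polynomial.eval_mul, Polynomial.eval_pow, Polynomial.eval_X]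
end
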